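/- If X is a Corson compact space, then its Alexandroff duplicate AD(X) is also Corson compact. -/

import Mathlib

open Filter Topology Set

universe u v

/-- `[X]^{≤ω}`: the countable subsets of `X`, ordered by inclusion. -/
abbrev CtbSet (X : Type*) := {A : Set X // A.Countable}

/-- A map between families of countable sets is `ω`-monotone if it is monotone with respect to
inclusion and preserves unions of increasing `ω`-chains. -/
def OmegaMonotone {X Y : Type*} (φ : CtbSet X → CtbSet Y) : Prop :=
  (∀ A B : CtbSet X, A.1 ⊆ B.1 → (φ A).1 ⊆ (φ B).1) ∧
  ∀ (A : ℕ → CtbSet X) (B : CtbSet X), (∀ n, (A n).1 ⊆ (A (n + 1)).1) →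
    B.1 = ⋃ n, (A n).1 → (φ B).1 = ⋃ n, (φ (A n)).1

/-- An assignment of sets indexed by a poset `Γ` is `ω`-monotone if it is order preserving and
sends suprema of increasing `ω`-chains to the union of the images. -/
def OmegaMonotoneIdx {Γ Y : Type*} [Preorder Γ] (D : Γ → Set Y) : Prop :=
  (∀ s t : Γ, s ≤ t → D s ⊆ D t) ∧
  ∀ (s : ℕ → Γ) (t : Γ), Monotone s → IsLUB (Set.range s) t → D t = ⋃ n, D (s n)

/-- `N` is a network of the map `f`. -/
def IsNetworkOfMap {X Y : Type*} [TopologicalSpace Y] (N : Set (Set X)) (f : X → Y) : Prop :=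
  ∀ x : X, ∀ U : Set Y, IsOpen U → f x ∈ U → ∃ M ∈ N, x ∈ M ∧ f '' M ⊆ U

/-- `q : X → Y` is an `ℝ`-quotient map. -/
def RQuotient {X Y : Type*} [TopologicalSpace X] [TopologicalSpace Y] (q : X → Y) : Prop :=
  Continuous q ∧ Function.Surjective q ∧ ∀ g : Y → ℝ, Continuous (g ∘ q) → Continuous g

/-- The family `r` of retractions indexed by `Γ` is an `r`-skeleton on `X`. -/
structure IsRSkeleton {X : Type*} [TopologicalSpace X] {Γ : Type*} [PartialOrder Γ]
    (r : Γ → X → X) : Prop where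
  directed : ∀ s t : Γ, ∃ u, s ≤ u ∧ t ≤ u
  sigma : ∀ s : ℕ → Γ, Monotone s → ∃ t, IsLUB (Set.range s) t
  cont : ∀ s, Continuous (r s)
  retract : ∀ s x, r s (r s x) = r s x
  cosmic : ∀ s, ∃ N : Set (Set X), N.Countable ∧ (∀ M ∈ N, M ⊆ Set.range (r s)) ∧
    ∀ x ∈ Set.range (r s), ∀ U : Set X, IsOpen U → x ∈ U → ∃ M ∈ N, x ∈ M ∧ M ⊆ U
  comm₁ : ∀ s t : Γ, s ≤ t → ∀ x, r s (r t x) = r s x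
  comm₂ : ∀ s t : Γ, s ≤ t → ∀ x, r t (r s x) = r s x
  chain : ∀ (s : ℕ → Γ) (t : Γ), Monotone s → IsLUB (Set.range s) t →
    ∀ x, Tendsto (fun n => r (s n) x) atTop (𝓝 (r t x))
  toId : ∀ x : X, Tendsto (fun s : Γ => r s x) atTop (𝓝 x)

def IsFullRSkeleton {X : Type*} [TopologicalSpace X] {Γ : Type*} [PartialOrder Γ]
    (r : Γ → X → X) : Prop :=
  IsRSkeleton r ∧ ∀ x : X, ∃ s : Γ, x ∈ Set.range (r s)

def HasFullRSkeleton (X : Type u) [TopologicalSpace X] : Prop :=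
  ∃ (Γ : Type u) (inst : PartialOrder Γ) (r : Γ → X → X), @IsFullRSkeleton X _ Γ inst r

/-- A strong `r`-skeleton: an `r`-skeleton such that for every index `s`, every `n` and every
closed subset `F` of `X^n` there is `t ≥ s` whose `n`-th power maps `F` into itself. -/
def IsStrongRSkeleton {X : Type*} [TopologicalSpace X] {Γ : Type*} [PartialOrder Γ]
    (r : Γ → X → X) : Prop :=
  IsRSkeleton r ∧ ∀ (s : Γ) (n : ℕ) (F : Set (Fin n → X)), IsClosed F →
    ∃ t : Γ, s ≤ t ∧ (fun (v : Fin n → X) (i : Fin n) => r t (v i)) '' F ⊆ F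

def HasStrongRSkeleton (X : Type u) [TopologicalSpace X] : Prop :=
  ∃ (Γ : Type u) (inst : PartialOrder Γ) (r : Γ → X → X), @IsStrongRSkeleton X _ Γ inst r

/-- A `q`-skeleton on `X` indexed by the up-directed σ-complete poset `Γ`. -/
structure QSkeleton (X : Type u) [TopologicalSpace X] (Γ : Type v) [PartialOrder Γ] where
  Xs : Γ → Type u
  top : ∀ s, TopologicalSpace (Xs s)
  q : ∀ s, X → Xs s
  D : Γ → Set X
  directed : ∀ s t : Γ, ∃ u, s ≤ u ∧ t ≤ u
  sigma : ∀ s : ℕ → Γ, Monotone s → ∃ t, IsLUB (Set.range s) t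
  rquot : ∀ s, @RQuotient X (Xs s) _ (top s) (q s)
  D_ctble : ∀ s, (D s).Countable
  dense : ∀ s, @Dense (Xs s) (top s) (q s '' D s)
  proj : ∀ s t : Γ, s ≤ t → ∃ p : Xs t → Xs s, @Continuous _ _ (top t) (top s) p ∧
    Function.Surjective p ∧ ∀ x, q s x = p (q t x)
  Dmono : OmegaMonotoneIdx D

/-- The `q`-skeleton is full: `C_p(X) = ⋃_s q_s^*(C_p(X_s))`. -/
def QSkeleton.Full {X : Type u} [TopologicalSpace X] {Γ : Type v} [PartialOrder Γ]
    (S : QSkeleton X Γ) : Prop :=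
  ∀ f : X → ℝ, Continuous f →
    ∃ (s : Γ) (g : S.Xs s → ℝ), @Continuous _ _ (S.top s) _ g ∧ f = g ∘ S.q s

def HasFullQSkeleton (X : Type u) [TopologicalSpace X] : Prop :=
  ∃ (Γ : Type u) (inst : PartialOrder Γ) (S : @QSkeleton X _ Γ inst), S.Full

/-- `C_p(X)`: continuous real-valued functions with the topology of pointwise convergence. -/
abbrev Cp (X : Type u) [TopologicalSpace X] : Type u := {f : X → ℝ // Continuous f}

/-- The diagonal map `Δ_A : X → ℝ^A` of a set `A ⊆ C_p(X)`. -/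
def cpDiag {X : Type u} [TopologicalSpace X] (A : Set (Cp X)) (x : X) : ↥A → ℝ :=
  fun f => f.1.1 x

/-- The topology of the Alexandroff duplicate on `X × Bool`. -/
def ADTopology (X : Type*) [TopologicalSpace X] : TopologicalSpace (X × Bool) where
  IsOpen V := ∀ p ∈ V, p.2 = false →
    ∃ U : Set X, IsOpen U ∧ p.1 ∈ U ∧ {q : X × Bool | q.1 ∈ U ∧ q ≠ (p.1, true)} ⊆ V
  isOpen_univ := fun p _ _ => ⟨Set.univ, isOpen_univ, trivial, fun _ _ => trivial⟩
  isOpen_inter := fun A B hA hB p hp hb => by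
    obtain ⟨U, hU, hxU, hUA⟩ := hA p hp.1 hb
    obtain ⟨W, hW, hxW, hWB⟩ := hB p hp.2 hb
    exact ⟨U ∩ W, hU.inter hW, ⟨hxU, hxW⟩,
      fun q hq => ⟨hUA ⟨hq.1.1, hq.2⟩, hWB ⟨hq.1.2, hq.2⟩⟩⟩
  isOpen_sUnion := fun S hS p hp hb => by
    obtain ⟨V, hV, hpV⟩ := hp
    obtain ⟨U, hU, hxU, hUV⟩ := hS V hV p hpV hb
    exact ⟨U, hU, hxU, fun q hq => ⟨V, hV, hUV hq⟩⟩

/-- The Alexandroff duplicate of `X`. -/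
def AD (X : Type u) [TopologicalSpace X] : Type u := X × Bool

instance (X : Type u) [TopologicalSpace X] : TopologicalSpace (AD X) := ADTopology X

/-- A compact Hausdorff space is Corson compact if it embeds into a Σ-product of real lines. -/
def IsCorsonCompact (X : Type u) [TopologicalSpace X] : Prop :=
  CompactSpace X ∧ T2Space X ∧ ∃ (κ : Type u) (e : X → κ → ℝ),
    IsEmbedding e ∧ ∀ x, {i | e x i ≠ 0}.Countable

/-- The assignments `r`, `N` witness that `X` is monotonically retractable. -/
structure MonRetractableWitness (X : Type u) [TopologicalSpace X]
    (r : CtbSet X → X → X) (N : CtbSet X → CtbSet (Set X)) : Prop where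
  cont : ∀ A, Continuous (r A)
  retract : ∀ A x, r A (r A x) = r A x
  sub : ∀ A : CtbSet X, A.1 ⊆ Set.range (r A)
  network : ∀ A, IsNetworkOfMap (N A).1 (r A)
  mono : OmegaMonotone N

def MonotonicallyRetractable (X : Type u) [TopologicalSpace X] : Prop :=
  ∃ (r : CtbSet X → X → X) (N : CtbSet X → CtbSet (Set X)), MonRetractableWitness X r N

/-- `X` is monotonically `ω`-stable. -/
def MonotonicallyOmegaStable (X : Type u) [TopologicalSpace X] : Prop :=
  ∃ N : CtbSet (Cp X) → CtbSet (Set X), OmegaMonotone N ∧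
    ∀ A : CtbSet (Cp X), IsNetworkOfMap (N A).1 (cpDiag (closure A.1))

/-- A subset `K` is countably compact: every countable open cover of `K` has a finite subcover. -/
def IsCountablyCompactSet {X : Type*} [TopologicalSpace X] (K : Set X) : Prop :=
  ∀ U : ℕ → Set X, (∀ n, IsOpen (U n)) → K ⊆ ⋃ n, U n → ∃ t : Finset ℕ, K ⊆ ⋃ n ∈ t, U n

/-- The closure of `A` under `φ`. -/
def phiBar {X : Type*} (φ : CtbSet X → CtbSet X) (A : CtbSet X) : Set X :=
  ⋂₀ {B : Set X | ∃ hB : B.Countable, A.1 ⊆ B ∧ (φ ⟨B, hB⟩).1 ⊆ B}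

/-- The iterates `φ_n` of `φ`: `φ_0(A) = A`, `φ_{n+1}(A) = φ_n(A) ∪ φ(φ_n(A))`. -/
def phiIter {X : Type*} (φ : CtbSet X → CtbSet X) : ℕ → CtbSet X → CtbSet X
  | 0, A => A
  | n + 1, A => ⟨(phiIter φ n A).1 ∪ (φ (phiIter φ n A)).1,
      (phiIter φ n A).2.union (φ (phiIter φ n A)).2⟩

section ADlemmas

variable {X : Type u} [TopologicalSpace X]

lemma isOpen_AD_iff {V : Set (AD X)} : IsOpen V ↔ ∀ p ∈ V, p.2 = false →
    ∃ U : Set X, IsOpen U ∧ p.1 ∈ U ∧ {q : X × Bool | q.1 ∈ U ∧ q ≠ (p.1, true)} ⊆ V :=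
  Iff.rfl

lemma isOpen_AD_singleton (x : X) : IsOpen {p : AD X | p = (x, true)} := by
  rw [isOpen_AD_iff]
  intro p hp hb
  simp only [Set.mem_setOf_eq] at hp
  rw [hp] at hb
  simp at hb

lemma isOpen_AD_S [T1Space X] (x : X) (U : Set X) (hU : IsOpen U) :
    IsOpen {q : AD X | q.1 ∈ U ∧ q ≠ (x, true)} := by
  rw [isOpen_AD_iff]
  rintro ⟨y, b⟩ ⟨hyU, _⟩ _
  by_cases hyx : y = x
  · subst hyx
    exact ⟨U, hU, hyU, fun q hq => hq⟩
  · refine ⟨U \ {x}, hU.sdiff isClosed_singleton, ⟨hyU, hyx⟩, ?_⟩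
    rintro q ⟨⟨hqU, hqx⟩, _⟩
    exact ⟨hqU, fun he => hqx (by rw [he]; exact rfl)⟩

lemma isOpen_AD_ne [T1Space X] (x : X) : IsOpen {p : AD X | p ≠ (x, true)} := by
  have := isOpen_AD_S (X := X) x Set.univ isOpen_univ
  convert this using 1
  ext p
  simp

lemma AD_nhds_false {x : X} {V : Set (AD X)} (hV : V ∈ @nhds (AD X) _ (x, false)) :
    ∃ U : Set X, IsOpen U ∧ x ∈ U ∧ {q : AD X | q.1 ∈ U ∧ q ≠ (x, true)} ⊆ V := by
  obtain ⟨W, hWV, hW, hxW⟩ := mem_nhds_iff.mp hV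
  obtain ⟨U, h1, h2, h3⟩ := isOpen_AD_iff.mp hW ⟨x, false⟩ hxW rfl
  exact ⟨U, h1, h2, fun q hq => hWV (h3 hq)⟩

lemma continuous_AD_fst : Continuous (fun p : AD X => p.1) := by
  rw [continuous_def]
  intro U hU
  rw [isOpen_AD_iff]
  intro p hp _
  exact ⟨U, hU, hp, fun q hq => hq.1⟩

lemma compactSpace_AD [CompactSpace X] : CompactSpace (AD X) := by
  rw [← isCompact_univ_iff, isCompact_iff_ultrafilter_le_nhds]
  intro f _
  obtain ⟨x, -, hx⟩ := (isCompact_univ (X := X)).ultrafilter_le_nhds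
    (f.map (fun p : AD X => p.1)) (by simp)
  rcases f.mem_or_compl_mem {p : AD X | p = (x, true)} with hmem | hcompl
  · refine ⟨(x, true), trivial, Filter.le_def.mpr fun V hV => ?_⟩
    exact Filter.mem_of_superset hmem
      (fun p hp => by rw [Set.mem_setOf_eq] at hp; rw [hp]; exact mem_of_mem_nhds hV)
  · refine ⟨(x, false), trivial, Filter.le_def.mpr fun V hV => ?_⟩
    obtain ⟨U, hU, hxU, hsub⟩ := AD_nhds_false hV
    have h1 : (fun p : AD X => p.1) ⁻¹' U ∈ f := hx (hU.mem_nhds hxU)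
    exact Filter.mem_of_superset (Filter.inter_mem h1 hcompl)
      (fun q hq => hsub ⟨hq.1, hq.2⟩)

lemma t2Space_AD [T2Space X] : T2Space (AD X) := by
  constructor
  rintro ⟨a, ba⟩ ⟨b, bb⟩ hne
  by_cases hab : a = b
  · subst hab
    have hbab : ba ≠ bb := fun hc => hne (by rw [hc])
    have hft : ((a, false) : AD X) ≠ ((a, true) : AD X) := fun hc => by
      have := congrArg Prod.snd hc
      simp at this
    cases ba <;> cases bb
    · exact absurd rfl hbab
    · refine ⟨{p : AD X | p ≠ (a, true)}, {p : AD X | p = (a, true)},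
        isOpen_AD_ne a, isOpen_AD_singleton a, hft, rfl, ?_⟩
      rw [Set.disjoint_iff]
      rintro p ⟨hp1, hp2⟩
      exact hp1 hp2
    · refine ⟨{p : AD X | p = (a, true)}, {p : AD X | p ≠ (a, true)},
        isOpen_AD_singleton a, isOpen_AD_ne a, rfl, hft, ?_⟩
      rw [Set.disjoint_iff]
      rintro p ⟨hp1, hp2⟩
      exact hp2 hp1
    · exact absurd rfl hbab
  · obtain ⟨U, V, hU, hV, haU, hbV, hUV⟩ := t2_separation hab
    refine ⟨(fun p : AD X => p.1) ⁻¹' U, (fun p : AD X => p.1) ⁻¹' V,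
      hU.preimage continuous_AD_fst, hV.preimage continuous_AD_fst, haU, hbV, ?_⟩
    rw [Set.disjoint_iff]
    rintro p ⟨hp1, hp2⟩
    exact hUV.le_bot ⟨hp1, hp2⟩

end ADlemmas

theorem isCorsonCompact_AD (X : Type u) [TopologicalSpace X]
    (h : IsCorsonCompact X) : IsCorsonCompact (AD X) := by
  classical
  obtain ⟨hcomp, ht2, κ, e, he, hsupp⟩ := h
  haveI := hcomp; haveI := ht2
  haveI : CompactSpace (AD X) := compactSpace_AD
  haveI : T2Space (AD X) := t2Space_AD
  refine ⟨inferInstance, inferInstance, κ ⊕ X,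
    fun p => Sum.elim (e p.1) (fun y => if p = (y, true) then (1 : ℝ) else 0), ?_, ?_⟩
  · have hcont : Continuous
        (fun p : AD X => Sum.elim (e p.1)
          (fun y => if p = (y, true) then (1 : ℝ) else 0)) := by
      apply continuous_pi
      rintro (i | y)
      · show Continuous fun p : AD X => e p.1 i
        exact ((continuous_apply i).comp he.continuous).comp continuous_AD_fst
      · show Continuous fun p : AD X => if p = (y, true) then (1 : ℝ) else 0
        apply IsLocallyConstant.continuous
        intro s
        by_cases h1 : (1 : ℝ) ∈ s <;> by_cases h0 : (0 : ℝ) ∈ s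
        · convert isOpen_univ
          ext p
          simp only [Set.mem_preimage, Set.mem_univ, iff_true]
          split_ifs <;> assumption
        · convert isOpen_AD_singleton (X := X) y using 1
          ext p
          simp only [Set.mem_preimage, Set.mem_setOf_eq]
          split_ifs with hp <;> simp [hp, h1, h0]
          exact rfl
        · convert isOpen_AD_ne (X := X) y using 1
          ext p
          simp only [Set.mem_preimage, Set.mem_setOf_eq]
          split_ifs with hp <;> simp [hp, h1, h0]
          · exact rfl
          · exact hp
        · convert isOpen_empty (X := AD X)
          ext p
          simp only [Set.mem_preimage, Set.mem_empty_iff_false, iff_false]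
          split_ifs <;> assumption
    have hinj : Function.Injective
        (fun p : AD X => Sum.elim (e p.1)
          (fun y => if p = (y, true) then (1 : ℝ) else 0)) := by
      rintro ⟨a, ba⟩ ⟨b, bb⟩ hpq
      have hab : a = b := he.injective (funext fun i => congrFun hpq (Sum.inl i))
      subst hab
      have h2 := congrFun hpq (Sum.inr a)
      simp only [Sum.elim_inr] at h2
      have c1 : ((a, false) : AD X) ≠ (a, true) := fun hc => by
        have := congrArg Prod.snd hc
        simp at this
      cases ba <;> cases bb
      · rfl
      · split_ifs at h2 <;> simp_all
        exact absurd rfl ‹¬((a, true) : AD X) = (a, true)›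
      · split_ifs at h2 <;> simp_all
        exact absurd rfl ‹¬((a, true) : AD X) = (a, true)›
      · rfl
    exact (hcont.isClosedEmbedding hinj).isEmbedding
  · intro p
    apply Set.Countable.mono ?_ (((hsupp p.1).image Sum.inl).union (Set.countable_singleton
      (Sum.inr p.1 : κ ⊕ X)))
    rintro (i | y) hi
    · exact Or.inl ⟨i, hi, rfl⟩
    · simp only [Set.mem_setOf_eq, Sum.elim_inr] at hi
      have hp : p = (y, true) := by
        by_contra hc
        rw [if_neg hc] at hi
        exact hi rfl
      right
      rw [hp]
      rfl
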